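/- Let G be a graph with a burning homomorphism lambda_G given by burning sequence S_G = (v_1, ..., v_n), and let T be a tree with radius r(T) <= n + 1. Then for any vertex v_0 in the center of T, the sequence (v_0, v_1, ..., v_n) is a burning sequence of the disjoint union G + T, and the resulting burning map lambda_{G+T} is a burning homomorphism. -/

import Mathlib

open SimpleGraph

/-- The `j`-th burned set `𝒩_j`: vertices within distance `j - k` of source `v_k` (`1 ≤ k ≤ j`). -/
def burnN {V : Type*} (G : SimpleGraph V) (s : ℕ → V) (n j : ℕ) : Set V :=
  {w | ∃ k, 1 ≤ k ∧ k ≤ n ∧ k ≤ j ∧ G.Reachable (s k) w ∧ G.dist (s k) w ≤ j - k}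

/-- The set `U_j`: vertices within distance `j - k` of source `v_k` for `1 ≤ k ≤ j - 1`. -/
def burnU {V : Type*} (G : SimpleGraph V) (s : ℕ → V) (n j : ℕ) : Set V :=
  {w | ∃ k, 1 ≤ k ∧ k ≤ n ∧ k + 1 ≤ j ∧ G.Reachable (s k) w ∧ G.dist (s k) w ≤ j - k}

/-- `(s 1, …, s n)` is a burning sequence: `v_j ∉ U_j` for `2 ≤ j ≤ n`, and `U_{n+1} = G`. -/
def IsBurningSeq {V : Type*} (G : SimpleGraph V) (s : ℕ → V) (n : ℕ) : Prop :=
  1 ≤ n ∧ (∀ j, 2 ≤ j → j ≤ n → s j ∉ burnU G s n j) ∧ ∀ w, w ∈ burnU G s n (n + 1)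

/-- The burning map `λ(w) = min { j | w ∈ 𝒩_j }`. -/
noncomputable def burnTime {V : Type*} (G : SimpleGraph V) (s : ℕ → V) (n : ℕ) (w : V) : ℕ :=
  sInf {j | w ∈ burnN G s n j}

/-- The end time `𝐓 = max_w λ(w)` of the burning. -/
noncomputable def endTime {V : Type*} [Fintype V] (G : SimpleGraph V) (s : ℕ → V) (n : ℕ) : ℕ :=
  Finset.univ.sup (burnTime G s n)

/-- A burning whose burning map is a homomorphism: `|λ(v) - λ(w)| = 1` on every edge. -/
def IsBurningHom {V : Type*} (G : SimpleGraph V) (s : ℕ → V) (n : ℕ) : Prop :=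
  IsBurningSeq G s n ∧
    ∀ v w, G.Adj v w →
      ((burnTime G s n v : ℤ) - burnTime G s n w).natAbs = 1
/-- The disjoint union of two graphs. -/
def sumGraph {α β : Type*} (G : SimpleGraph α) (H : SimpleGraph β) :
    SimpleGraph (α ⊕ β) where
  Adj x y :=
    match x, y with
    | Sum.inl a, Sum.inl b => G.Adj a b
    | Sum.inr a, Sum.inr b => H.Adj a b
    | _, _ => False
  symm := ⟨by rintro (a | a) (b | b) h; exacts [h.symm, h.elim, h.elim, h.symm]⟩
  loopless := ⟨by rintro (a | a) h; exacts [G.loopless.irrefl a h, H.loopless.irrefl a h]⟩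

section Aux
variable {α β : Type*} {G : SimpleGraph α} {H : SimpleGraph β}

@[simp] lemma sumGraph_adj_ll {a b : α} :
    (sumGraph G H).Adj (Sum.inl a) (Sum.inl b) ↔ G.Adj a b := Iff.rfl
@[simp] lemma sumGraph_adj_rr {a b : β} :
    (sumGraph G H).Adj (Sum.inr a) (Sum.inr b) ↔ H.Adj a b := Iff.rfl
@[simp] lemma sumGraph_adj_lr {a : α} {b : β} :
    ¬ (sumGraph G H).Adj (Sum.inl a) (Sum.inr b) := fun h => h
@[simp] lemma sumGraph_adj_rl {a : β} {b : α} :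
    ¬ (sumGraph G H).Adj (Sum.inr a) (Sum.inl b) := fun h => h

lemma sum_walk_inl {x y : α ⊕ β} (p : (sumGraph G H).Walk x y) :
    ∀ {c : α}, y = Sum.inl c → ∃ b, x = Sum.inl b ∧ ∃ q : G.Walk b c, q.length ≤ p.length := by
  induction p with
  | nil => rintro c rfl; exact ⟨c, rfl, Walk.nil, le_rfl⟩
  | @cons u v w h p ih =>
    rintro c rfl
    obtain ⟨b', rfl, q, hq⟩ := ih rfl
    match u, h with
    | Sum.inl a, h => exact ⟨a, rfl, Walk.cons h q, Nat.succ_le_succ hq⟩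
    | Sum.inr a, h => exact (sumGraph_adj_rl h).elim

lemma sum_walk_inr {x y : α ⊕ β} (p : (sumGraph G H).Walk x y) :
    ∀ {c : β}, y = Sum.inr c → ∃ b, x = Sum.inr b ∧ ∃ q : H.Walk b c, q.length ≤ p.length := by
  induction p with
  | nil => rintro c rfl; exact ⟨c, rfl, Walk.nil, le_rfl⟩
  | @cons u v w h p ih =>
    rintro c rfl
    obtain ⟨b', rfl, q, hq⟩ := ih rfl
    match u, h with
    | Sum.inr a, h => exact ⟨a, rfl, Walk.cons h q, Nat.succ_le_succ hq⟩
    | Sum.inl a, h => exact (sumGraph_adj_lr h).elim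

def sumHomL : G →g sumGraph G H := ⟨Sum.inl, fun h => h⟩
def sumHomR : H →g sumGraph G H := ⟨Sum.inr, fun h => h⟩

lemma reach_ll {a b : α} :
    (sumGraph G H).Reachable (Sum.inl a) (Sum.inl b) ↔ G.Reachable a b := by
  constructor
  · rintro ⟨p⟩
    obtain ⟨b', hb, q, -⟩ := sum_walk_inl p rfl
    cases hb; exact ⟨q⟩
  · exact fun h => h.map (sumHomL (H := H))

lemma reach_rr {a b : β} :
    (sumGraph G H).Reachable (Sum.inr a) (Sum.inr b) ↔ H.Reachable a b := by
  constructor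
  · rintro ⟨p⟩
    obtain ⟨b', hb, q, -⟩ := sum_walk_inr p rfl
    cases hb; exact ⟨q⟩
  · exact fun h => h.map (sumHomR (G := G))

lemma not_reach_rl {a : β} {b : α} : ¬ (sumGraph G H).Reachable (Sum.inr a) (Sum.inl b) := by
  rintro ⟨p⟩
  obtain ⟨b', hb, -⟩ := sum_walk_inl p rfl
  exact absurd hb (by simp)

lemma not_reach_lr {a : α} {b : β} : ¬ (sumGraph G H).Reachable (Sum.inl a) (Sum.inr b) :=
  fun h => not_reach_rl h.symm

lemma dist_ll {a b : α} (h : G.Reachable a b) :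
    (sumGraph G H).dist (Sum.inl a) (Sum.inl b) = G.dist a b := by
  refine le_antisymm ?_ ?_
  · obtain ⟨q, hq⟩ := h.exists_walk_length_eq_dist
    calc (sumGraph G H).dist (Sum.inl a) (Sum.inl b) ≤ (q.map sumHomL).length := dist_le _
    _ = G.dist a b := by rw [Walk.length_map, hq]
  · obtain ⟨p, hp⟩ := ((reach_ll (H := H)).mpr h).exists_walk_length_eq_dist
    obtain ⟨b', hb, q, hq⟩ := sum_walk_inl p rfl
    cases hb
    exact le_trans (dist_le q) (by omega)

lemma dist_rr {a b : β} (h : H.Reachable a b) :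
    (sumGraph G H).dist (Sum.inr a) (Sum.inr b) = H.dist a b := by
  refine le_antisymm ?_ ?_
  · obtain ⟨q, hq⟩ := h.exists_walk_length_eq_dist
    calc (sumGraph G H).dist (Sum.inr a) (Sum.inr b) ≤ (q.map sumHomR).length := dist_le _
    _ = H.dist a b := by rw [Walk.length_map, hq]
  · obtain ⟨p, hp⟩ := ((reach_rr (G := G)).mpr h).exists_walk_length_eq_dist
    obtain ⟨b', hb, q, hq⟩ := sum_walk_inr p rfl
    cases hb
    exact le_trans (dist_le q) (by omega)

end Aux

section Tree
variable {β : Type*} [DecidableEq β] {H : SimpleGraph β}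

lemma tree_path_length_eq_dist (hT : H.IsTree) {x y : β} (p : H.Walk x y) (hp : p.IsPath) :
    p.length = H.dist x y := by
  refine le_antisymm ?_ (dist_le p)
  obtain ⟨w, hw⟩ := (hT.isConnected x y).exists_walk_length_eq_dist
  have huniq := hT.IsAcyclic.path_unique ⟨p, hp⟩ ⟨w.bypass, w.bypass_isPath⟩
  have hpeq : p.length = w.bypass.length := congrArg (fun q : H.Path x y => q.1.length) huniq
  calc p.length = w.bypass.length := hpeq
  _ ≤ w.length := Walk.length_bypass_le w
  _ = H.dist x y := hw

lemma tree_adj_dist (hT : H.IsTree) (v0 : β) {b c : β} (h : H.Adj b c) :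
    H.dist v0 c = H.dist v0 b + 1 ∨ H.dist v0 b = H.dist v0 c + 1 := by
  obtain ⟨w, hw⟩ := (hT.isConnected v0 b).exists_walk_length_eq_dist
  set p := w.bypass with hpdef
  have hp : p.IsPath := w.bypass_isPath
  have hplen : p.length = H.dist v0 b := tree_path_length_eq_dist hT p hp
  by_cases hc : c ∈ p.support
  · right
    have hsplit := congrArg Walk.length (p.take_spec hc)
    rw [Walk.length_append] at hsplit
    have h1 : H.dist v0 c ≤ (p.takeUntil c hc).length := dist_le _
    have h2 : H.dist c b ≤ (p.dropUntil c hc).length := dist_le _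
    have h3 : H.dist c b = 1 := dist_eq_one_iff_adj.mpr h.symm
    have h4 : H.dist v0 b ≤ H.dist v0 c + H.dist c b := hT.isConnected.dist_triangle
    omega
  · left
    have hc' : c ∉ p.reverse.support := by rwa [Walk.support_reverse, List.mem_reverse]
    have hq : (Walk.cons h.symm p.reverse).IsPath := hp.reverse.cons hc'
    have := tree_path_length_eq_dist hT (Walk.cons h.symm p.reverse).reverse hq.reverse
    rw [Walk.length_reverse, Walk.length_cons, Walk.length_reverse] at this
    omega

end Tree

section Burn
variable {V W : Type*} {G : SimpleGraph V} {Tg : SimpleGraph W} {s : ℕ → V} {n : ℕ} {v0 : W}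

lemma sfun_one :
    (fun k => if k = 1 then (Sum.inr v0 : V ⊕ W) else Sum.inl (s (k - 1))) 1 = Sum.inr v0 := by
  simp

lemma sfun_succ {k : ℕ} (hk : 1 ≤ k) :
    (fun k => if k = 1 then (Sum.inr v0 : V ⊕ W) else Sum.inl (s (k - 1))) (k + 1)
      = Sum.inl (s k) := by
  beta_reduce
  rw [if_neg (by omega : ¬ k + 1 = 1), Nat.add_sub_cancel]

lemma sfun_ne_one {k : ℕ} (hk : k ≠ 1) :
    (fun k => if k = 1 then (Sum.inr v0 : V ⊕ W) else Sum.inl (s (k - 1))) k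
      = Sum.inl (s (k - 1)) := by
  beta_reduce
  rw [if_neg hk]

lemma burnN_inl {a : V} {j : ℕ} :
    Sum.inl a ∈ burnN (sumGraph G Tg)
        (fun k => if k = 1 then Sum.inr v0 else Sum.inl (s (k - 1))) (n + 1) j
      ↔ a ∈ burnN G s n (j - 1) := by
  constructor
  · rintro ⟨k, hk1, hkn, hkj, hre, hd⟩
    by_cases hk : k = 1
    · rw [hk, sfun_one] at hre
      exact absurd hre not_reach_rl
    · rw [sfun_ne_one hk] at hre hd
      have hre' : G.Reachable (s (k - 1)) a := reach_ll.mp hre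
      rw [dist_ll hre'] at hd
      exact ⟨k - 1, by omega, by omega, by omega, hre', by omega⟩
  · rintro ⟨k, hk1, hkn, hkj, hre, hd⟩
    have hj : k + 1 ≤ j := by omega
    refine ⟨k + 1, by omega, by omega, by omega, ?_, ?_⟩
    · rw [sfun_succ hk1]; exact reach_ll.mpr hre
    · rw [sfun_succ hk1, dist_ll hre]; omega

lemma burnN_inr (hc : Tg.Connected) {b : W} {j : ℕ} :
    Sum.inr b ∈ burnN (sumGraph G Tg)
        (fun k => if k = 1 then Sum.inr v0 else Sum.inl (s (k - 1))) (n + 1) j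
      ↔ 1 ≤ j ∧ Tg.dist v0 b ≤ j - 1 := by
  constructor
  · rintro ⟨k, hk1, hkn, hkj, hre, hd⟩
    by_cases hk : k = 1
    · rw [hk, sfun_one] at hre hd
      rw [dist_rr (reach_rr.mp hre)] at hd
      exact ⟨by omega, by omega⟩
    · rw [sfun_ne_one hk] at hre
      exact absurd hre not_reach_lr
  · rintro ⟨hj, hd⟩
    refine ⟨1, le_rfl, by omega, hj, ?_, ?_⟩
    · rw [sfun_one]; exact reach_rr.mpr (hc v0 b)
    · rw [sfun_one, dist_rr (hc v0 b)]; omega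

lemma burnTime_inl {a : V} (hne : ∃ i, a ∈ burnN G s n i) :
    burnTime (sumGraph G Tg)
        (fun k => if k = 1 then Sum.inr v0 else Sum.inl (s (k - 1))) (n + 1) (Sum.inl a)
      = burnTime G s n a + 1 := by
  set m := burnTime G s n a with hm
  have hmem : a ∈ burnN G s n m := Nat.sInf_mem hne
  refine le_antisymm ?_ ?_
  · exact Nat.sInf_le (burnN_inl.mpr (by simpa using hmem))
  · refine le_csInf ⟨m + 1, burnN_inl.mpr (by simpa using hmem)⟩ ?_
    intro j hj
    have hj' := burnN_inl.mp hj
    have hm' : m ≤ j - 1 := Nat.sInf_le hj'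
    obtain ⟨k, hk1, -, hkj, -, -⟩ := hj'
    omega

lemma burnTime_inr (hc : Tg.Connected) {b : W} :
    burnTime (sumGraph G Tg)
        (fun k => if k = 1 then Sum.inr v0 else Sum.inl (s (k - 1))) (n + 1) (Sum.inr b)
      = Tg.dist v0 b + 1 := by
  unfold burnTime
  have : {j | Sum.inr b ∈ burnN (sumGraph G Tg)
      (fun k => if k = 1 then Sum.inr v0 else Sum.inl (s (k - 1))) (n + 1) j}
      = Set.Ici (Tg.dist v0 b + 1) := by
    ext j
    rw [Set.mem_setOf_eq, burnN_inr hc, Set.mem_Ici]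
    omega
  rw [this, csInf_Ici]

end Burn


/-- Theorem: if `G` has a burning homomorphism with sources `(v_1, …, v_n)` and `T` is a tree
of radius at most `n + 1`, then for any vertex `v_0` of the center of `T` the sequence
`(v_0, v_1, …, v_n)` defines a burning homomorphism of the disjoint union `G + T`. -/
theorem stmt14 {V W : Type*} [Fintype V] [Fintype W]
    (G : SimpleGraph V) (Tg : SimpleGraph W) (hT : Tg.IsTree)
    (s : ℕ → V) (n : ℕ) (hG : IsBurningHom G s n) (v0 : W)
    (hcen : ∀ w : W, Finset.univ.sup (Tg.dist v0) ≤ Finset.univ.sup (Tg.dist w))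
    (hrad : Finset.univ.sup (Tg.dist v0) ≤ n + 1) :
    IsBurningHom (sumGraph G Tg)
      (fun k => if k = 1 then Sum.inr v0 else Sum.inl (s (k - 1))) (n + 1) := by
  classical
  obtain ⟨⟨hn, hnb, hcov⟩, hhom⟩ := hG
  have hUN : ∀ (a : V) {j}, a ∈ burnU G s n j → a ∈ burnN G s n j := by
    rintro a j ⟨k, h1, h2, h3, h4, h5⟩
    exact ⟨k, h1, h2, by omega, h4, h5⟩
  have hne : ∀ a : V, ∃ i, a ∈ burnN G s n i := fun a => ⟨n + 1, hUN a (hcov a)⟩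
  constructor
  · refine ⟨by omega, ?_, ?_⟩
    · intro j hj2 hjn
      rw [sfun_ne_one (by omega)]
      rintro ⟨k, hk1, hkn, hkj, hre, hd⟩
      by_cases hk : k = 1
      · rw [hk, sfun_one] at hre
        exact not_reach_rl hre
      · rw [sfun_ne_one hk] at hre hd
        have hre' : G.Reachable (s (k - 1)) (s (j - 1)) := reach_ll.mp hre
        rw [dist_ll hre'] at hd
        exact hnb (j - 1) (by omega) (by omega)
          ⟨k - 1, by omega, by omega, by omega, hre', by omega⟩
    · rintro (a | b)
      · obtain ⟨k, hk1, hkn, hkj, hre, hd⟩ := hcov a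
        refine ⟨k + 1, by omega, by omega, by omega, ?_, ?_⟩
        · rw [sfun_succ hk1]; exact reach_ll.mpr hre
        · rw [sfun_succ hk1, dist_ll hre]; omega
      · refine ⟨1, le_rfl, by omega, by omega, ?_, ?_⟩
        · rw [sfun_one]; exact reach_rr.mpr (hT.isConnected v0 b)
        · rw [sfun_one, dist_rr (hT.isConnected v0 b)]
          have : Tg.dist v0 b ≤ Finset.univ.sup (Tg.dist v0) :=
            Finset.le_sup (Finset.mem_univ b)
          omega
  · rintro (a | a) (b | b) hadj
    · rw [burnTime_inl (hne a), burnTime_inl (hne b)]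
      have := hhom a b hadj
      omega
    · exact (sumGraph_adj_lr hadj).elim
    · exact (sumGraph_adj_rl hadj).elim
    · rw [burnTime_inr hT.isConnected, burnTime_inr hT.isConnected]
      rcases tree_adj_dist hT v0 hadj with h | h <;> omega
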